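/- Let f(x,y,u) = y(y−1)/(x−y) and h(x,y,u) = (2xy − x − y)/(x−y)^2 be the data of the Gibbons–Tsarev system (33). Then the extension ∂_i v = g(p_i, u, v) ∂_i u with g(p,u,v) = 1/(p−1)^2 − v/(p−1) is compatible with this system: the expression E(x,y) = g_1(x,u,v)·f(y,x,u) + g_2(x,u,v) + g_3(x,u,v)·g(y,u,v) + g(x,u,v)·h(x,y,u) satisfies E(x,y) = E(y,x) for all distinct x, y different from 1 and all u, v. -/

import Mathlib

/-- Partial derivative of `g(p,u,v)` in its first argument. -/
noncomputable def e1 (g : ℝ → ℝ → ℝ → ℝ) (p u v : ℝ) : ℝ := deriv (fun s => g s u v) p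
/-- Partial derivative of `g(p,u,v)` in its second argument. -/
noncomputable def e2 (g : ℝ → ℝ → ℝ → ℝ) (p u v : ℝ) : ℝ := deriv (fun s => g p s v) u
/-- Partial derivative of `g(p,u,v)` in its third argument. -/
noncomputable def e3 (g : ℝ → ℝ → ℝ → ℝ) (p u v : ℝ) : ℝ := deriv (fun s => g p u s) v

/-- The compatibility expression `E(x,y)` for an extension `∂ᵢv = g(pᵢ,u,v) ∂ᵢu` of a
one-field Gibbons–Tsarev system with data `f`, `h`. -/
noncomputable def extE (f h g : ℝ → ℝ → ℝ → ℝ) (x y u v : ℝ) : ℝ :=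
  e1 g x u v * f y x u + e2 g x u v + e3 g x u v * g y u v + g x u v * h x y u

lemma aux_e1 (g : ℝ → ℝ → ℝ → ℝ)
    (hg : ∀ p u v : ℝ, g p u v = 1 / (p - 1) ^ 2 - v / (p - 1))
    (p u v : ℝ) (hp : p ≠ 1) :
    e1 g p u v = -2 / (p - 1) ^ 3 + v / (p - 1) ^ 2 := by
  have hp' : p - 1 ≠ 0 := sub_ne_zero.mpr hp
  have h1 : HasDerivAt (fun s : ℝ => s - 1) 1 p := by
    simpa using (hasDerivAt_id p).sub_const 1
  have h2 : HasDerivAt (fun s : ℝ => (s - 1) ^ 2) (2 * (p - 1)) p := by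
    simpa using h1.fun_pow 2
  have h3 : HasDerivAt (fun s : ℝ => 1 / (s - 1) ^ 2)
      (-(2 * (p - 1)) / ((p - 1) ^ 2) ^ 2) p := by
    have := h2.fun_inv (pow_ne_zero 2 hp')
    simpa [one_div] using this
  have h4 : HasDerivAt (fun s : ℝ => v / (s - 1)) (v * (-1 / (p - 1) ^ 2)) p := by
    have := (h1.inv hp').const_mul v
    simpa [div_eq_mul_inv, neg_div] using this
  have h5 : HasDerivAt (fun s : ℝ => g s u v)
      (-(2 * (p - 1)) / ((p - 1) ^ 2) ^ 2 - v * (-1 / (p - 1) ^ 2)) p := by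
    have := h3.fun_sub h4
    refine this.congr_of_eventuallyEq ?_
    filter_upwards with s; rw [hg]
  rw [e1, h5.deriv]
  field_simp
  ring

lemma aux_e2 (g : ℝ → ℝ → ℝ → ℝ)
    (hg : ∀ p u v : ℝ, g p u v = 1 / (p - 1) ^ 2 - v / (p - 1))
    (p u v : ℝ) : e2 g p u v = 0 := by
  have : (fun s : ℝ => g p s v) = fun _ => 1 / (p - 1) ^ 2 - v / (p - 1) := by
    funext s; rw [hg]
  rw [e2, this, deriv_const]

lemma aux_e3 (g : ℝ → ℝ → ℝ → ℝ)
    (hg : ∀ p u v : ℝ, g p u v = 1 / (p - 1) ^ 2 - v / (p - 1))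
    (p u v : ℝ) : e3 g p u v = -(1 / (p - 1)) := by
  have h5 : HasDerivAt (fun s : ℝ => g p u s) (-(1 / (p - 1))) v := by
    have h : HasDerivAt (fun s : ℝ => 1 / (p - 1) ^ 2 - s / (p - 1))
        (0 - 1 / (p - 1)) v :=
      (hasDerivAt_const v (1 / (p - 1) ^ 2)).sub
        (by simpa [one_div] using (hasDerivAt_id v).div_const (p - 1))
    have h' : HasDerivAt (fun s : ℝ => 1 / (p - 1) ^ 2 - s / (p - 1))
        (-(1 / (p - 1))) v := by simpa using h
    refine h'.congr_of_eventuallyEq ?_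
    filter_upwards with s; rw [hg]
  rw [e3, h5.deriv]

/-- for the Gibbons–Tsarev system (33) with `f(x,y,u) = y(y−1)/(x−y)`,
`h(x,y,u) = (2xy−x−y)/(x−y)²`, the extension `g(p,u,v) = 1/(p−1)² − v/(p−1)` is
compatible: `E(x,y) = E(y,x)` for distinct `x, y` different from `1` and all `u, v`. -/
theorem stmt_5 (f h g : ℝ → ℝ → ℝ → ℝ)
    (hf : ∀ x y u : ℝ, f x y u = y * (y - 1) / (x - y))
    (hh : ∀ x y u : ℝ, h x y u = (2 * x * y - x - y) / (x - y) ^ 2)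
    (hg : ∀ p u v : ℝ, g p u v = 1 / (p - 1) ^ 2 - v / (p - 1)) :
    ∀ (x y u v : ℝ), x ≠ y → x ≠ 1 → y ≠ 1 →
      extE f h g x y u v = extE f h g y x u v := by
  intro x y u v hxy hx hy
  have hx' : x - 1 ≠ 0 := sub_ne_zero.mpr hx
  have hy' : y - 1 ≠ 0 := sub_ne_zero.mpr hy
  have hxy' : x - y ≠ 0 := sub_ne_zero.mpr hxy
  have hyx' : y - x ≠ 0 := sub_ne_zero.mpr hxy.symm
  simp only [extE, aux_e1 g hg _ _ _ hx, aux_e1 g hg _ _ _ hy,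
    aux_e2 g hg, aux_e3 g hg, hf, hh, hg]
  field_simp
  ring
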